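/- arXiv:cs/0602027 — 4 statements merged into one kernel-verified Lean document; each statement's English description precedes it below -/
import Mathlib

section
/- Let (D, ⊑) be a finite partial order with least element ⊥, and let F be a finite set of functions on D, each monotonic and inflationary. Then every execution of the Generic Iteration algorithm (starting with d := ⊥ and G := F, repeatedly choosing g ∈ G; if g(d) ≠ d then setting d := g(d) and adding to G all functions f ∉ G with f(d) = d but f(g(d)) ≠ g(d), else removing g from G) terminates, and upon termination d is the least common fixpoint of all functions in F. -/
/-- Generic Iteration: states are pairs (d, G); one step chooses g ∈ G,
and if g d ≠ d updates d to g d and adds to G all f ∉ G with f d = d but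
f (g d) ≠ g d; otherwise removes g from G. Every execution terminates,
and any terminal state (G = ∅) reachable from (⊥, F) carries the least
common fixpoint of F. -/
theorem generic_iteration_correct {D : Type*} [PartialOrder D] [Fintype D] [OrderBot D]
    (F : Set (D → D)) (hF : F.Finite)
    (hmono : ∀ f ∈ F, Monotone f) (hinfl : ∀ f ∈ F, ∀ x, x ≤ f x)
    (step : (D × Set (D → D)) → (D × Set (D → D)) → Prop)
    (hstep : ∀ s s', step s s' ↔ ∃ g ∈ s.2,
      (g s.1 ≠ s.1 ∧
        s' = (g s.1, s.2 ∪ {f | f ∈ F ∧ f ∉ s.2 ∧ f s.1 = s.1 ∧ f (g s.1) ≠ g s.1})) ∨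
      (g s.1 = s.1 ∧ s' = (s.1, s.2 \ {g}))) :
    (¬ ∃ e : ℕ → D × Set (D → D), e 0 = (⊥, F) ∧ ∀ n, step (e n) (e (n + 1))) ∧
    (∀ (k : ℕ) (e : ℕ → D × Set (D → D)), e 0 = (⊥, F) →
      (∀ n < k, step (e n) (e (n + 1))) → (e k).2 = ∅ →
      (∀ f ∈ F, f (e k).1 = (e k).1) ∧
      ∀ d : D, (∀ f ∈ F, f d = d) → (e k).1 ≤ d) := by

  have hpres : ∀ s s' : D × Set (D → D), step s s' → s.2 ⊆ F → s'.2 ⊆ F := by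
    intro s s' h hsub
    obtain ⟨g, hg, h⟩ := (hstep s s').mp h
    rcases h with ⟨_, rfl⟩ | ⟨_, rfl⟩
    · rintro f (hf | hf)
      exacts [hsub hf, hf.1]
    · exact fun f hf => hsub hf.1
  set m : D × Set (D → D) → ℕ :=
    fun s => {x : D | s.1 ≤ x}.ncard * (F.ncard + 1) + s.2.ncard with hm
  have hdec : ∀ s s' : D × Set (D → D), step s s' → s.2 ⊆ F → m s' < m s := by
    intro s s' h hsub
    have hs'F : s'.2 ⊆ F := hpres s s' h hsub
    obtain ⟨g, hg, h⟩ := (hstep s s').mp h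
    rcases h with ⟨hne, rfl⟩ | ⟨heq, rfl⟩
    · have hlt : s.1 < g s.1 := lt_of_le_of_ne (hinfl g (hsub hg) s.1) (Ne.symm hne)
      have hA : {x : D | g s.1 ≤ x}.ncard < {x : D | s.1 ≤ x}.ncard := by
        apply Set.ncard_lt_ncard _ (Set.toFinite _)
        constructor
        · intro x hx
          exact le_trans (le_of_lt hlt) hx
        · intro hsub2
          exact absurd (hsub2 (le_refl s.1)) (by simpa using not_le_of_gt hlt)
      have hG : (s.2 ∪ {f | f ∈ F ∧ f ∉ s.2 ∧ f s.1 = s.1 ∧ f (g s.1) ≠ g s.1}).ncard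
          ≤ F.ncard := Set.ncard_le_ncard hs'F hF
      simp only [hm]
      nlinarith [hA, hG]
    · have hG : (s.2 \ {g}).ncard < s.2.ncard :=
        Set.ncard_diff_singleton_lt_of_mem hg (hF.subset hsub)
      simp only [hm]
      omega
  constructor
  · rintro ⟨e, he0, hst⟩
    have hsubn : ∀ n, (e n).2 ⊆ F := by
      intro n
      induction n with
      | zero => rw [he0]
      | succ n ih => exact hpres _ _ (hst n) ih
    have hmd : ∀ n, m (e n) + n ≤ m (e 0) := by
      intro n
      induction n with
      | zero => simp
      | succ n ih =>
        have := hdec _ _ (hst n) (hsubn n)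
        omega
    have := hmd (m (e 0) + 1)
    omega
  · intro k e he0 hst hterm
    have hinv : ∀ n, n ≤ k → (e n).2 ⊆ F ∧
        (∀ f ∈ F, f ∉ (e n).2 → f (e n).1 = (e n).1) ∧
        (∀ d : D, (∀ f ∈ F, f d = d) → (e n).1 ≤ d) := by
      intro n
      induction n with
      | zero =>
        intro _
        rw [he0]
        exact ⟨Set.Subset.rfl, fun f hf hnf => absurd hf hnf, fun d _ => bot_le⟩
      | succ n ih =>
        intro hn
        obtain ⟨h1, h2, h3⟩ := ih (Nat.le_of_succ_le hn)
        obtain ⟨g, hg, h⟩ := (hstep _ _).mp (hst n hn)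
        rcases h with ⟨hne, hs'⟩ | ⟨heq, hs'⟩
        · refine ⟨?_, ?_, ?_⟩
          · rw [hs']
            rintro f (hf | hf)
            exacts [h1 hf, hf.1]
          · rw [hs']
            intro f hf hnf
            have hnf1 : f ∉ (e n).2 := fun h => hnf (Or.inl h)
            have hfd : f (e n).1 = (e n).1 := h2 f hf hnf1
            by_contra hc
            exact hnf (Or.inr ⟨hf, hnf1, hfd, hc⟩)
          · intro d hd
            rw [hs']
            show g (e n).1 ≤ d
            calc g (e n).1 ≤ g d := hmono g (h1 hg) (h3 d hd)
              _ = d := hd g (h1 hg)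
        · refine ⟨?_, ?_, ?_⟩
          · rw [hs']
            exact fun f hf => h1 hf.1
          · rw [hs']
            intro f hf hnf
            by_cases hfg : f = g
            · subst hfg
              simpa using heq
            · exact h2 f hf (fun h => hnf ⟨h, hfg⟩)
          · intro d hd
            rw [hs']
            exact h3 d hd
    obtain ⟨h1, h2, h3⟩ := hinv k le_rfl
    refine ⟨fun f hf => h2 f hf (by simp [hterm]), h3⟩
end

section
/- Let (D, ⊑) be a finite partial order with least element ⊥ and let F be a finite set of monotonic inflationary functions on D. Then the set of common fixpoints of F has a least element, namely the limit of the (eventually stabilizing) sequence obtained by iterating functions from F starting at ⊥ in any fair order. -/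
/-- On a finite partial order with ⊥, the common fixpoints of a finite set of
monotonic inflationary functions have a least element, namely the limit of any
fair iteration starting at ⊥. -/
theorem least_common_fixpoint_of_fair_iteration {D : Type*} [PartialOrder D]
    [Fintype D] [OrderBot D]
    (F : Set (D → D)) (hF : F.Finite)
    (hmono : ∀ f ∈ F, Monotone f) (hinfl : ∀ f ∈ F, ∀ x, x ≤ f x)
    (σ : ℕ → (D → D)) (hσF : ∀ n, σ n ∈ F)
    (hfair : ∀ f ∈ F, ∀ N : ℕ, ∃ n ≥ N, σ n = f)
    (e : ℕ → D) (he0 : e 0 = ⊥) (hestep : ∀ n, e (n + 1) = σ n (e n)) :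
    ∃ N : ℕ, (∀ n ≥ N, e n = e N) ∧
      (∀ f ∈ F, f (e N) = e N) ∧
      (∀ d : D, (∀ f ∈ F, f d = d) → e N ≤ d) := by
  have hemono : Monotone e := by
    apply monotone_nat_of_le_succ
    intro n
    rw [hestep n]
    exact hinfl _ (hσF n) _
  -- find maximal element of range
  obtain ⟨m, ⟨N, hN⟩, hmax⟩ : ∃ a ∈ Set.range e, ∀ a' ∈ Set.range e, id a ≤ id a' → id a = id a' :=
    (Set.Finite.exists_maximalFor id _ (Set.toFinite (Set.range e)) (Set.range_nonempty e)).imp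
      fun a h => ⟨h.1, fun a' ha' hle => le_antisymm hle (h.2 ha' hle)⟩
  have hstab : ∀ n ≥ N, e n = e N := by
    intro n hn
    have := hmax (e n) ⟨n, rfl⟩ (hN ▸ hemono hn)
    simp only [id] at this
    rw [← this, hN]
  refine ⟨N, hstab, ?_, ?_⟩
  · intro f hf
    obtain ⟨n, hn, hσn⟩ := hfair f hf N
    have h1 : e (n + 1) = f (e n) := by rw [hestep n, hσn]
    rw [hstab n hn] at h1
    rw [← h1, hstab (n + 1) (le_trans hn (Nat.le_succ n))]
  · intro d hd
    have : ∀ n, e n ≤ d := by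
      intro n
      induction n with
      | zero => rw [he0]; exact bot_le
      | succ n ih =>
        rw [hestep n]
        calc σ n (e n) ≤ σ n d := hmono _ (hσF n) ih
          _ = d := hd _ (hσF n)
    exact this N
end

section
/- Let (D, ⊑) be a finite partial order with least element and let F be a finite set of monotonic inflationary functions on D. If d and d' are both obtained as the final element of a stabilizing iteration of functions from F starting at the same element d₀ (i.e., d and d' are common fixpoints of F reachable from d₀ by finitely many applications of functions in F), then d = d'. -/
/-- On a finite partial order with a least element, any two common fixpoints of a
finite set F of monotonic inflationary functions that are reachable from the same
element d₀ by finitely many applications of functions from F coincide. -/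
theorem stabilizing_iterations_unique_outcome {D : Type*} [PartialOrder D]
    [Fintype D] [OrderBot D]
    (F : Set (D → D)) (hF : F.Finite)
    (hmono : ∀ f ∈ F, Monotone f) (hinfl : ∀ f ∈ F, ∀ x, x ≤ f x)
    (d₀ d d' : D)
    (l l' : List (D → D)) (hl : ∀ f ∈ l, f ∈ F) (hl' : ∀ f ∈ l', f ∈ F)
    (hd : d = l.foldl (fun x f => f x) d₀) (hd' : d' = l'.foldl (fun x f => f x) d₀)
    (hfix : ∀ f ∈ F, f d = d) (hfix' : ∀ f ∈ F, f d' = d') :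
    d = d' := by
  have key : ∀ (L : List (D → D)) (x e : D), (∀ f ∈ L, f ∈ F) → x ≤ e →
      (∀ f ∈ F, f e = e) → L.foldl (fun x f => f x) x ≤ e := by
    intro L
    induction L with
    | nil => intro x e _ hxe _; simpa using hxe
    | cons g t ih =>
      intro x e hL hxe hfe
      have hg : g ∈ F := hL g (List.mem_cons_self)
      exact ih (g x) e (fun f hf => hL f (List.mem_cons_of_mem _ hf))
        (by calc g x ≤ g e := hmono g hg hxe
                 _ = e := hfe g hg) hfe
  have h1 : d ≤ d' := hd ▸ key l d₀ d' hl (by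
    have infl : ∀ (L : List (D → D)) (x : D), (∀ f ∈ L, f ∈ F) →
        x ≤ L.foldl (fun x f => f x) x := by
      intro L
      induction L with
      | nil => intro x _; simp
      | cons g t ih =>
        intro x hL
        exact le_trans (hinfl g (hL g (List.mem_cons_self)) x)
          (ih (g x) fun f hf => hL f (List.mem_cons_of_mem _ hf))
    exact hd' ▸ infl l' d₀ hl') hfix'
  have h2 : d' ≤ d := hd' ▸ key l' d₀ d hl' (by
    have infl : ∀ (L : List (D → D)) (x : D), (∀ f ∈ L, f ∈ F) →
        x ≤ L.foldl (fun x f => f x) x := by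
      intro L
      induction L with
      | nil => intro x _; simp
      | cons g t ih =>
        intro x hL
        exact le_trans (hinfl g (hL g (List.mem_cons_self)) x)
          (ih (g x) fun f hf => hL f (List.mem_cons_of_mem _ hf))
    exact hd ▸ infl l d₀ hl) hfix
  exact le_antisymm h1 h2
end

section
/- On the product of finite partial orders (D₁,⊑₁), …, (Dₙ,⊑ₙ) each with a least element, ordered componentwise, if each function g in a finite family F acts only on the coordinates in its scheme s (leaving the others unchanged) and is monotonic and inflationary on those coordinates, then g is monotonic and inflationary on the full product order; consequently its iteration from the bottom element terminates in the least common fixpoint of F. -/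
/-- On a finite product of finite partial orders with least elements, functions
acting monotonically and inflationarily on their scheme only (identity outside)
are monotonic and inflationary on the whole product; consequently every fair
iteration of a finite family F of such functions from ⊥ stabilizes at the least
common fixpoint of F. -/
theorem compound_domains_generic_iteration {n : ℕ} {D : Fin n → Type*}
    [∀ i, PartialOrder (D i)] [∀ i, Fintype (D i)] [∀ i, OrderBot (D i)]
    (F : Set ((∀ i, D i) → (∀ i, D i))) (hF : F.Finite)
    (scheme : ((∀ i, D i) → (∀ i, D i)) → Set (Fin n))
    (houtside : ∀ g ∈ F, ∀ d, ∀ i, i ∉ scheme g → g d i = d i)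
    (hdep : ∀ g ∈ F, ∀ d e, (∀ i ∈ scheme g, d i = e i) →
      ∀ i ∈ scheme g, g d i = g e i)
    (hmono : ∀ g ∈ F, ∀ d e, (∀ i ∈ scheme g, d i ≤ e i) →
      ∀ i ∈ scheme g, g d i ≤ g e i)
    (hinfl : ∀ g ∈ F, ∀ d, ∀ i ∈ scheme g, d i ≤ g d i) :
    (∀ g ∈ F, Monotone g ∧ ∀ d, d ≤ g d) ∧
    (∀ (σ : ℕ → ((∀ i, D i) → (∀ i, D i))), (∀ n, σ n ∈ F) →
      (∀ f ∈ F, ∀ N : ℕ, ∃ m ≥ N, σ m = f) →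
      ∀ (e : ℕ → ∀ i, D i), e 0 = ⊥ → (∀ m, e (m + 1) = σ m (e m)) →
      ∃ N : ℕ, (∀ m ≥ N, e m = e N) ∧ (∀ f ∈ F, f (e N) = e N) ∧
        ∀ d : ∀ i, D i, (∀ f ∈ F, f d = d) → e N ≤ d) := by
  have key : ∀ g ∈ F, Monotone g ∧ ∀ d, d ≤ g d := by
    intro g hg
    constructor
    · intro d e hde i
      by_cases hi : i ∈ scheme g
      · exact hmono g hg d e (fun j _ => hde j) i hi
      · rw [houtside g hg d i hi, houtside g hg e i hi]; exact hde i
    · intro d i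
      by_cases hi : i ∈ scheme g
      · exact hinfl g hg d i hi
      · rw [houtside g hg d i hi]
  refine ⟨key, ?_⟩
  intro σ hσ hfair e he0 hstep
  have emono : Monotone e := by
    apply monotone_nat_of_le_succ
    intro m
    rw [hstep m]
    exact (key _ (hσ m)).2 (e m)
  obtain ⟨x, hx, hmax⟩ : ∃ a ∈ Set.range e, ∀ a' ∈ Set.range e, id a ≤ id a' → id a = id a' := by
    obtain ⟨a, ha, hm⟩ := Set.Finite.exists_maximalFor id _ (Set.range e).toFinite (Set.range_nonempty e)
    exact ⟨a, ha, fun a' h' hle => le_antisymm hle (hm h' hle)⟩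
  obtain ⟨N, hN⟩ := hx
  have hstab : ∀ m ≥ N, e m = e N := by
    intro m hm
    have h1 : x ≤ e m := hN ▸ emono hm
    have := hmax (e m) ⟨m, rfl⟩ h1
    simp only [id] at this
    rw [← this, hN]
  refine ⟨N, hstab, ?_, ?_⟩
  · intro f hf
    obtain ⟨m, hm, hσm⟩ := hfair f hf N
    have h1 : e (m + 1) = f (e N) := by
      rw [hstep m, hσm, hstab m hm]
    rw [← h1, hstab (m + 1) (le_trans hm (Nat.le_succ m))]
  · intro d hd
    have : ∀ m, e m ≤ d := by
      intro m
      induction m with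
      | zero => rw [he0]; exact bot_le
      | succ k ih =>
        rw [hstep k]
        calc σ k (e k) ≤ σ k d := (key _ (hσ k)).1 ih
          _ = d := hd _ (hσ k)
    exact this N
end
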